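/- arXiv:2009.14347 — 2 statements merged into one kernel-verified Lean document; each statement's English description precedes it below -/
import Mathlib

section
/- Let ζ(x) = 2x − sin(2x), ψ(x) = sin(x)/(1 + ζ(x)²), and V(x) = −32·sin(x)·(ζ(x)³·cos(x) − 3·ζ(x)²·sin(x)³ + ζ(x)·cos(x) + sin(x)³)/(1 + ζ(x)²)². Then for every m ≥ 0 and every real E with E² = 1 + m², the function ψ is a nonzero square-integrable solution of the reduced Klein–Gordon eigenvalue equation −ψ''(x) + (m² + V(x))·ψ(x) = E²·ψ(x) for all x ∈ ℝ, and |E| = √(1+m²) > m when m ≥ 0, so the eigenvalues E = ±√(1+m²) lie in the continuum region (−∞, −m] ∪ [m, ∞). -/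
open Real MeasureTheory

/-- ζ(x) = 2x − sin(2x) -/
noncomputable def zeta (x : ℝ) : ℝ := 2 * x - Real.sin (2 * x)

/-- ψ(x) = sin(x)/(1 + ζ(x)²) -/
noncomputable def psi (x : ℝ) : ℝ := Real.sin x / (1 + zeta x ^ 2)

/-- One-dimensional von Neumann–Wigner potential. -/
noncomputable def V (x : ℝ) : ℝ :=
  -32 * Real.sin x *
    (zeta x ^ 3 * Real.cos x - 3 * zeta x ^ 2 * Real.sin x ^ 3
      + zeta x * Real.cos x + Real.sin x ^ 3) / (1 + zeta x ^ 2) ^ 2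

lemma hz (x : ℝ) : HasDerivAt zeta (4 * Real.sin x ^ 2) x := by
  have h1 : HasDerivAt (fun x : ℝ => 2 * x) 2 x := by
    simpa using (hasDerivAt_id x).const_mul 2
  have h2 : HasDerivAt (fun x : ℝ => Real.sin (2 * x)) (Real.cos (2 * x) * 2) x := by
    exact ((Real.hasDerivAt_sin (2 * x)).comp x ((hasDerivAt_id x).const_mul 2)).congr_deriv
      (by ring)
  have h3 := h1.sub h2
  refine h3.congr_deriv ?_
  have := Real.cos_two_mul x
  have := Real.sin_sq_add_cos_sq x
  nlinarith

lemma hden (x : ℝ) : HasDerivAt (fun x => 1 + zeta x ^ 2) (8 * zeta x * Real.sin x ^ 2) x := by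
  have := ((hz x).pow 2).const_add 1
  exact this.congr_deriv (by ring)

lemma dpos (x : ℝ) : 0 < 1 + zeta x ^ 2 := by positivity

noncomputable def psi1 (x : ℝ) : ℝ :=
  (Real.cos x * (1 + zeta x ^ 2) - Real.sin x * (8 * zeta x * Real.sin x ^ 2)) /
    (1 + zeta x ^ 2) ^ 2

lemma hpsi (x : ℝ) : HasDerivAt psi (psi1 x) x :=
  (Real.hasDerivAt_sin x).div (hden x) (dpos x).ne'

noncomputable def psi2 (x : ℝ) : ℝ :=
  ((-Real.sin x * (1 + zeta x ^ 2) - 32 * Real.sin x ^ 5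
      - 16 * zeta x * Real.sin x ^ 2 * Real.cos x) * (1 + zeta x ^ 2) ^ 2
    - (Real.cos x * (1 + zeta x ^ 2) - Real.sin x * (8 * zeta x * Real.sin x ^ 2)) *
        (16 * zeta x * Real.sin x ^ 2 * (1 + zeta x ^ 2))) / ((1 + zeta x ^ 2) ^ 2) ^ 2

lemma hpsi1 (x : ℝ) : HasDerivAt psi1 (psi2 x) x := by
  have hu : HasDerivAt
      (fun x => Real.cos x * (1 + zeta x ^ 2) - Real.sin x * (8 * zeta x * Real.sin x ^ 2))
      (-Real.sin x * (1 + zeta x ^ 2) - 32 * Real.sin x ^ 5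
        - 16 * zeta x * Real.sin x ^ 2 * Real.cos x) x := by
    have h1 := (Real.hasDerivAt_cos x).mul (hden x)
    have h2 : HasDerivAt (fun x => 8 * zeta x * Real.sin x ^ 2)
        (8 * (4 * Real.sin x ^ 2) * Real.sin x ^ 2
          + 8 * zeta x * (2 * Real.sin x ^ 1 * Real.cos x)) x := by
      have := (((hz x).const_mul 8)).mul ((Real.hasDerivAt_sin x).pow 2)
      exact this.congr_deriv (by simp only [Pi.pow_apply]; ring)
    have h3 := (Real.hasDerivAt_sin x).mul h2
    have := h1.sub h3
    exact this.congr_deriv (by ring)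
  have hv : HasDerivAt (fun x => (1 + zeta x ^ 2) ^ 2)
      (16 * zeta x * Real.sin x ^ 2 * (1 + zeta x ^ 2)) x := by
    have := (hden x).pow 2
    exact this.congr_deriv (by ring)
  have hvne : ((1 : ℝ) + zeta x ^ 2) ^ 2 ≠ 0 := by positivity
  exact hu.div hv hvne

lemma deriv_psi : deriv psi = psi1 := funext fun x => (hpsi x).deriv

lemma deriv2_psi (x : ℝ) : deriv (deriv psi) x = psi2 x := by
  rw [deriv_psi]; exact (hpsi1 x).deriv

lemma key_bound (x : ℝ) : 1 + x ^ 2 ≤ 4 * (1 + zeta x ^ 2) := by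
  have h1 := Real.sin_sq_le_one (2 * x)
  unfold zeta
  nlinarith [sq_nonneg (15 * x - 8 * Real.sin (2 * x))]


/-- For every mass m ≥ 0 and every E with E² = 1 + m², the function ψ is a
nonzero square-integrable solution of the reduced Klein–Gordon eigenvalue
equation −ψ'' + (m² + V)ψ = E²ψ, and the eigenvalue E = ±√(1+m²) lies in the
continuum region (−∞, −m] ∪ [m, ∞) (indeed |E| > m). -/
theorem KG_eigenvalue_embedded_in_continuum :
    ∀ m : ℝ, 0 ≤ m → ∀ E : ℝ, E ^ 2 = 1 + m ^ 2 →
      psi ≠ 0 ∧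
      MeasureTheory.Integrable (fun x : ℝ => psi x ^ 2) MeasureTheory.volume ∧
      (∀ x : ℝ, -(deriv (deriv psi)) x + (m ^ 2 + V x) * psi x = E ^ 2 * psi x) ∧
      |E| = Real.sqrt (1 + m ^ 2) ∧ m < |E| ∧ (E ≤ -m ∨ m ≤ E) := by
  intro m hm E hE
  refine ⟨?_, ?_, ?_, ?_, ?_, ?_⟩
  · intro h
    have h2 := congrFun h (Real.pi / 2)
    simp only [psi, Real.sin_pi_div_two, Pi.zero_apply] at h2
    have := dpos (Real.pi / 2)
    rw [div_eq_zero_iff] at h2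
    rcases h2 with h2 | h2 <;> linarith
  · have hcont : Continuous fun x : ℝ => psi x ^ 2 := by
      apply Continuous.pow
      apply Continuous.div
      · exact Real.continuous_sin
      · have : Continuous zeta := by unfold zeta; continuity
        continuity
      · exact fun x => (dpos x).ne'
    refine MeasureTheory.Integrable.mono' ((integrable_inv_one_add_sq).const_mul 4)
      hcont.aestronglyMeasurable (Filter.Eventually.of_forall fun x => ?_)
    rw [Real.norm_eq_abs, abs_of_nonneg (sq_nonneg _)]
    have hk := key_bound x
    have h1 : Real.sin x ^ 2 ≤ 1 := Real.sin_sq_le_one x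
    have hd := dpos x
    have hx : (0:ℝ) < 1 + x ^ 2 := by positivity
    rw [psi, div_pow, div_le_iff₀ (by positivity)]
    have h4 : (4 : ℝ) * (1 + x ^ 2)⁻¹ * (1 + zeta x ^ 2) ^ 2
        = 4 * (1 + zeta x ^ 2) ^ 2 / (1 + x ^ 2) := by ring
    rw [h4, le_div_iff₀ hx]
    nlinarith [sq_nonneg (zeta x), sq_nonneg (Real.sin x)]
  · intro x
    rw [deriv2_psi, hE]
    unfold psi2 psi V
    have hd := (dpos x).ne'
    field_simp
    ring
  · rw [← hE, Real.sqrt_sq_eq_abs]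
  · nlinarith [sq_abs E, abs_nonneg E]
  · rcases le_or_gt E 0 with h | h
    · left
      have : |E| = -E := abs_of_nonpos h
      nlinarith [sq_abs E, abs_nonneg E]
    · right
      have : |E| = E := abs_of_pos h
      nlinarith [sq_abs E, abs_nonneg E]
end

section
/- Let ζ(x) = 2x − sin(2x) and V(x) = −32·sin(x)·(ζ(x)³·cos(x) − 3·ζ(x)²·sin(x)³ + ζ(x)·cos(x) + sin(x)³)/(1 + ζ(x)²)². Then for every m ≥ 0 and every real E with E² > 16 + m², the equation −u''(x) + (m² + V(x))·u(x) = E²·u(x) for all x ∈ ℝ has no nonzero twice continuously differentiable square-integrable solution u : ℝ → ℝ. In other words, even for the von Neumann–Wigner scalar potential, the Klein–Gordon operator has no eigenvalues E with |E| > √(16 + m²). -/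
open Real MeasureTheory

noncomputable def ww (x : ℝ) : ℝ := (1 + zeta x ^ 2)⁻¹
noncomputable def zd (x : ℝ) : ℝ := 4 - 4 * Real.cos x ^ 2
noncomputable def gg (x : ℝ) : ℝ := 8 * zeta x * ww x
noncomputable def gd (x : ℝ) : ℝ := 8 * zd x * ww x + 8 * zeta x * (-(2 * zeta x * zd x) * ww x ^ 2)
noncomputable def ss2 (x : ℝ) : ℝ := 2 * Real.sin x * Real.cos x
noncomputable def cc2 (x : ℝ) : ℝ := Real.cos x ^ 2 - Real.sin x ^ 2
noncomputable def AA (L x : ℝ) : ℝ := -(gg x * ss2 x) / (L - 1)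
noncomputable def BB (L x : ℝ) : ℝ := gg x * cc2 x / (L - 1)
noncomputable def DA (L x : ℝ) : ℝ := -(gd x * ss2 x + gg x * (2 * cc2 x)) / (L - 1)
noncomputable def DB (L x : ℝ) : ℝ := (gd x * cc2 x + gg x * (-2 * ss2 x)) / (L - 1)
noncomputable def NN (L : ℝ) (u q : ℝ → ℝ) (x : ℝ) : ℝ := q x ^ 2 + L * u x ^ 2
noncomputable def MM (L : ℝ) (u q : ℝ → ℝ) (x : ℝ) : ℝ :=
  NN L u q x + AA L x * (q x ^ 2 - L * u x ^ 2) + BB L x * (2 * u x * q x)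
noncomputable def DM (L : ℝ) (u q : ℝ → ℝ) (x : ℝ) : ℝ :=
  V x * (2 * u x * q x) + DA L x * (q x ^ 2 - L * u x ^ 2)
    + AA L x * ((V x - 2 * L) * (2 * u x * q x)) + DB L x * (2 * u x * q x)
    + BB L x * (2 * (q x ^ 2 - L * u x ^ 2) + 2 * V x * u x ^ 2)

lemma one_add_sq_ne (x : ℝ) : (1 : ℝ) + zeta x ^ 2 ≠ 0 := by positivity

lemma hasDerivAt_zeta (x : ℝ) : HasDerivAt zeta (zd x) x := by
  have h2 : HasDerivAt (fun x : ℝ => Real.sin (2 * x)) (Real.cos (2*x) * 2) x := by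
    have := (Real.hasDerivAt_sin (2*x)).comp x ((hasDerivAt_id x).const_mul 2)
    exact this.congr_deriv (by ring)
  exact ((((hasDerivAt_id x).const_mul 2)).sub h2).congr_deriv
    (by rw [zd, Real.cos_two_mul]; ring)

lemma hasDerivAt_ww (x : ℝ) : HasDerivAt ww (-(2 * zeta x * zd x) * ww x ^ 2) x := by
  have h1 : HasDerivAt (fun x : ℝ => 1 + zeta x ^ 2) (2 * zeta x * zd x) x :=
    (((hasDerivAt_zeta x).pow 2).const_add 1).congr_deriv (by ring)
  exact (h1.inv (one_add_sq_ne x)).congr_deriv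
    (by rw [ww]; field_simp)

lemma hasDerivAt_gg (x : ℝ) : HasDerivAt gg (gd x) x :=
  (((hasDerivAt_zeta x).const_mul 8).mul (hasDerivAt_ww x)).congr_deriv (by rw [gd])

lemma hasDerivAt_ss2 (x : ℝ) : HasDerivAt ss2 (2 * cc2 x) x :=
  (((Real.hasDerivAt_sin x).const_mul 2).mul (Real.hasDerivAt_cos x)).congr_deriv
    (by rw [cc2]; ring)

lemma hasDerivAt_cc2 (x : ℝ) : HasDerivAt cc2 (-2 * ss2 x) x := by
  have h := (((Real.hasDerivAt_cos x).pow 2).sub ((Real.hasDerivAt_sin x).pow 2))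
  exact h.congr_deriv (by rw [ss2]; push_cast; ring)

lemma hasDerivAt_AA (L : ℝ) (x : ℝ) : HasDerivAt (AA L) (DA L x) x := by
  have h := (((hasDerivAt_gg x).mul (hasDerivAt_ss2 x)).neg).div_const (L - 1)
  exact h.congr_deriv (by rw [DA])

lemma hasDerivAt_BB (L : ℝ) (x : ℝ) : HasDerivAt (BB L) (DB L x) x := by
  have h := ((hasDerivAt_gg x).mul (hasDerivAt_cc2 x)).div_const (L - 1)
  exact h.congr_deriv (by rw [DB])

lemma hasDerivAt_MM (L : ℝ) (u q : ℝ → ℝ) (x : ℝ)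
    (hu : HasDerivAt u (q x) x) (hq : HasDerivAt q ((V x - L) * u x) x) :
    HasDerivAt (MM L u q) (DM L u q x) x := by
  have hq2 : HasDerivAt (fun y => q y ^ 2) (2 * q x * ((V x - L) * u x)) x :=
    (hq.pow 2).congr_deriv (by ring)
  have hu2 : HasDerivAt (fun y => u y ^ 2) (2 * u x * q x) x :=
    (hu.pow 2).congr_deriv (by ring)
  have hN : HasDerivAt (fun y => q y ^ 2 + L * u y ^ 2)
      (2 * q x * ((V x - L) * u x) + L * (2 * u x * q x)) x := hq2.add (hu2.const_mul L)
  have hX : HasDerivAt (fun y => q y ^ 2 - L * u y ^ 2)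
      (2 * q x * ((V x - L) * u x) - L * (2 * u x * q x)) x := hq2.sub (hu2.const_mul L)
  have hY : HasDerivAt (fun y => 2 * u y * q y)
      (2 * u x * ((V x - L) * u x) + 2 * q x * q x) x := by
    have := (hu.const_mul 2).mul hq
    exact this.congr_deriv (by ring)
  have h := (hN.add ((hasDerivAt_AA L x).mul hX)).add ((hasDerivAt_BB L x).mul hY)
  have heq : MM L u q = fun y => (q y ^ 2 + L * u y ^ 2) + AA L y * (q y ^ 2 - L * u y ^ 2)
      + BB L y * (2 * u y * q y) := by
    funext y; rw [MM, NN]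
  rw [heq]
  exact h.congr_deriv (by rw [DM]; ring)

noncomputable def DD (x : ℝ) : ℝ := 32 * Real.sin x ^ 4 * (3 * zeta x ^ 2 - 1) * ww x ^ 2

lemma ww_pos (x : ℝ) : 0 < ww x := by rw [ww]; positivity
lemma ww_le_one (x : ℝ) : ww x ≤ 1 := by
  rw [ww]; rw [inv_le_one_iff₀]; right; nlinarith [sq_nonneg (zeta x)]
lemma z2w : ∀ x : ℝ, zeta x ^ 2 * ww x = 1 - ww x := by
  intro x; rw [ww]; field_simp; ring

lemma abs_mul_le {a b a' b' : ℝ} (ha : |a| ≤ a') (hb : |b| ≤ b') : |a*b| ≤ a'*b' := by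
  rw [abs_mul]
  exact mul_le_mul ha hb (abs_nonneg _) ((abs_nonneg a).trans ha)

lemma abs_gg (x : ℝ) : |gg x| ≤ 4 := by
  have h := abs_nonneg (zeta x)
  have hw := ww_pos x
  have h2 : 2 * |zeta x| ≤ 1 + zeta x ^ 2 := by nlinarith [sq_abs (zeta x), sq_nonneg (|zeta x| - 1)]
  have : |gg x| = 8 * |zeta x| * ww x := by
    rw [gg, abs_mul, abs_mul, abs_of_nonneg hw.le]; simp [abs_of_nonneg]
  rw [this, ww]
  rw [mul_inv_le_iff₀ (by positivity)]
  nlinarith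
lemma gg_sq (x : ℝ) : gg x ^ 2 ≤ 64 * ww x := by
  have hw := ww_pos x
  have hz2 := z2w x
  have h1 : gg x ^ 2 = 64 * (zeta x ^ 2 * ww x) * ww x := by rw [gg]; ring
  rw [h1, hz2]
  nlinarith [ww_le_one x]
lemma abs_ss2 (x : ℝ) : |ss2 x| ≤ 1 := by
  rw [ss2]
  have := Real.sin_sq_add_cos_sq x
  rw [abs_le]; constructor <;> nlinarith [sq_nonneg (Real.sin x + Real.cos x), sq_nonneg (Real.sin x - Real.cos x)]
lemma abs_cc2 (x : ℝ) : |cc2 x| ≤ 1 := by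
  rw [cc2]
  have := Real.sin_sq_add_cos_sq x
  rw [abs_le]; constructor <;> nlinarith [sq_nonneg (Real.sin x), sq_nonneg (Real.cos x)]
lemma abs_gd (x : ℝ) : |gd x| ≤ 32 * ww x := by
  have hgd : gd x = 8 * zd x * ww x * (2 * ww x - 1) := by
    have hz2 := z2w x
    rw [gd]
    linear_combination (-16 * zd x * ww x) * hz2
  have h0 : 0 ≤ zd x := by rw [zd]; nlinarith [sq_nonneg (Real.cos x), Real.cos_sq_le_one x]
  have h4 : zd x ≤ 4 := by rw [zd]; nlinarith [sq_nonneg (Real.cos x)]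
  have hw := ww_pos x
  have hw1 := ww_le_one x
  have habs : |2 * ww x - 1| ≤ 1 := by rw [abs_le]; constructor <;> nlinarith
  calc |gd x| = |8 * zd x * ww x| * |2 * ww x - 1| := by rw [hgd, abs_mul]
    _ ≤ |8 * zd x * ww x| * 1 := by
        exact mul_le_mul_of_nonneg_left habs (abs_nonneg _)
    _ = 8 * zd x * ww x := by rw [mul_one, abs_of_nonneg (by positivity)]
    _ ≤ 32 * ww x := by nlinarith
lemma abs_DD (x : ℝ) : |DD x| ≤ 96 * ww x := by
  have hw := ww_pos x
  have hz2 := z2w x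
  have hs : Real.sin x ^ 4 ≤ 1 := by
    have h1 : Real.sin x ^ 2 ≤ 1 := Real.sin_sq_le_one x
    nlinarith [sq_nonneg (Real.sin x)]
  have hs0 : (0:ℝ) ≤ Real.sin x ^ 4 := by positivity
  have key : |(3 * zeta x ^ 2 - 1) * ww x ^ 2| ≤ 3 * ww x := by
    have h1 : (3 * zeta x ^ 2 - 1) * ww x ^ 2 = 3 * (zeta x ^ 2 * ww x) * ww x - ww x ^ 2 := by ring
    rw [h1, hz2, abs_le]
    constructor <;> nlinarith [ww_le_one x]
  have : |DD x| = 32 * Real.sin x ^ 4 * |(3 * zeta x ^ 2 - 1) * ww x ^ 2| := by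
    rw [DD, mul_assoc, abs_mul, abs_of_nonneg (by positivity : (0:ℝ) ≤ 32 * Real.sin x ^ 4), abs_mul]
  rw [this]
  nlinarith [abs_nonneg ((3 * zeta x ^ 2 - 1) * ww x ^ 2)]

lemma V_decomp (x : ℝ) : V x = -(2 * gg x * ss2 x) + DD x := by
  have h1 : (1:ℝ) + zeta x ^ 2 ≠ 0 := one_add_sq_ne x
  rw [V, DD, gg, ss2, ww]
  field_simp
  ring

lemma abs_V (x : ℝ) : |V x| ≤ 104 := by
  rw [V_decomp x]
  have h1 : |(-(2 * gg x * ss2 x))| ≤ 8 := by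
    rw [abs_neg]
    have := abs_mul_le (abs_mul_le (le_refl |(2:ℝ)|) (abs_gg x)) (abs_ss2 x)
    simpa using this.trans (by norm_num)
  have h2 := (abs_DD x).trans (by nlinarith [ww_le_one x, ww_pos x] : 96 * ww x ≤ 96)
  calc |(-(2 * gg x * ss2 x)) + DD x| ≤ |(-(2 * gg x * ss2 x))| + |DD x| := abs_add_le _ _
    _ ≤ 104 := by linarith

lemma abs_AA (L : ℝ) (hL : 16 < L) (x : ℝ) : |AA L x| ≤ 4 / 15 := by
  rw [AA, abs_div, abs_neg, abs_of_pos (by linarith : (0:ℝ) < L - 1)]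
  rw [div_le_iff₀ (by linarith)]
  have := abs_mul_le (abs_gg x) (abs_ss2 x)
  nlinarith
lemma abs_BB (L : ℝ) (hL : 16 < L) (x : ℝ) : |BB L x| ≤ 4 / 15 := by
  rw [BB, abs_div, abs_of_pos (by linarith : (0:ℝ) < L - 1)]
  rw [div_le_iff₀ (by linarith)]
  have := abs_mul_le (abs_gg x) (abs_cc2 x)
  nlinarith

lemma NN_nonneg (L : ℝ) (hL : 16 < L) (u q : ℝ → ℝ) (x : ℝ) : 0 ≤ NN L u q x := by
  rw [NN]; positivity
lemma abs_X_le (L : ℝ) (hL : 16 < L) (u q : ℝ → ℝ) (x : ℝ) :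
    |q x ^ 2 - L * u x ^ 2| ≤ NN L u q x := by
  rw [NN, abs_le]
  constructor <;> nlinarith [sq_nonneg (q x), sq_nonneg (u x)]
lemma abs_Y_le (L : ℝ) (hL : 16 < L) (u q : ℝ → ℝ) (x : ℝ) :
    |2 * u x * q x| ≤ NN L u q x / 4 := by
  rw [NN, abs_le]
  constructor <;> nlinarith [sq_nonneg (q x - 4 * u x), sq_nonneg (q x + 4 * u x), sq_nonneg (u x)]
lemma sq_u_le (L : ℝ) (hL : 16 < L) (u q : ℝ → ℝ) (x : ℝ) :
    u x ^ 2 ≤ NN L u q x / 16 := by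
  rw [NN]; nlinarith [sq_nonneg (q x), sq_nonneg (u x)]

lemma MM_ge (L : ℝ) (hL : 16 < L) (u q : ℝ → ℝ) (x : ℝ) :
    2 / 3 * NN L u q x ≤ MM L u q x := by
  have h1 := abs_mul_le (abs_AA L hL x) (abs_X_le L hL u q x)
  have h2 := abs_mul_le (abs_BB L hL x) (abs_Y_le L hL u q x)
  have h3 := abs_le.mp h1
  have h4 := abs_le.mp h2
  have h5 := NN_nonneg L hL u q x
  rw [MM]; cases h3; cases h4; linarith
lemma MM_le (L : ℝ) (hL : 16 < L) (u q : ℝ → ℝ) (x : ℝ) :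
    MM L u q x ≤ 4 / 3 * NN L u q x := by
  have h1 := abs_mul_le (abs_AA L hL x) (abs_X_le L hL u q x)
  have h2 := abs_mul_le (abs_BB L hL x) (abs_Y_le L hL u q x)
  have h3 := abs_le.mp h1
  have h4 := abs_le.mp h2
  have h5 := NN_nonneg L hL u q x
  rw [MM]; cases h3; cases h4; linarith
lemma MM_nonneg (L : ℝ) (hL : 16 < L) (u q : ℝ → ℝ) (x : ℝ) : 0 ≤ MM L u q x :=
  le_trans (by nlinarith [NN_nonneg L hL u q x]) (MM_ge L hL u q x)

lemma DM_bound (L : ℝ) (hL : 16 < L) (u q : ℝ → ℝ) (x : ℝ) :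
    |DM L u q x| ≤ 65 * ww x * MM L u q x := by
  have hL1 : (0:ℝ) < L - 1 := by linarith
  have hw := ww_pos x
  have hN0 := NN_nonneg L hL u q x
  -- structured form
  have hid : DM L u q x = (-(gd x * ss2 x) / (L - 1)) * (q x ^ 2 - L * u x ^ 2)
      + (DD x + AA L x * V x + gd x * cc2 x / (L - 1)) * (2 * u x * q x)
      + (2 * BB L x * V x) * u x ^ 2 := by
    have hd : (L - 1) * (L - 1)⁻¹ = 1 := mul_inv_cancel₀ (ne_of_gt hL1)
    rw [DM, DA, DB, AA, BB, V_decomp x]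
    simp only [div_eq_mul_inv]
    linear_combination (2 * gg x * ss2 x * (2 * u x * q x)) * hd
  -- coefficient bounds
  have hE1 : |(-(gd x * ss2 x) / (L - 1))| ≤ 3 * ww x := by
    rw [abs_div, abs_neg, abs_of_pos hL1, div_le_iff₀ hL1]
    have := abs_mul_le (abs_gd x) (abs_ss2 x)
    nlinarith
  have hgV : |gg x * V x| ≤ 512 * ww x := by
    have h1 : |V x| ≤ 2 * |gg x| + 96 * ww x := by
      rw [V_decomp x]
      have h2 := abs_mul_le (abs_mul_le (le_refl |(2:ℝ)|) (le_refl |gg x|)) (abs_ss2 x)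
      have h3 := abs_DD x
      calc |(-(2 * gg x * ss2 x)) + DD x| ≤ |(-(2 * gg x * ss2 x))| + |DD x| := abs_add_le _ _
        _ ≤ 2 * |gg x| + 96 * ww x := by rw [abs_neg] at *; simp only [abs_two] at h2; nlinarith [abs_nonneg (gg x)]
    have h4 := abs_mul_le (le_refl |gg x|) h1
    have h5 : |gg x| * (2 * |gg x| + 96 * ww x) ≤ 512 * ww x := by
      have h6 : |gg x| ^ 2 ≤ 64 * ww x := by rw [sq_abs]; exact gg_sq x
      nlinarith [abs_gg x, abs_nonneg (gg x)]
    calc |gg x * V x| ≤ |gg x| * |V x| := by rw [abs_mul]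
      _ ≤ |gg x| * (2 * |gg x| + 96 * ww x) := by
          exact mul_le_mul_of_nonneg_left h1 (abs_nonneg _)
      _ ≤ 512 * ww x := h5
  have hE2 : |DD x + AA L x * V x + gd x * cc2 x / (L - 1)| ≤ 140 * ww x := by
    have h1 : |AA L x * V x| ≤ 35 * ww x := by
      have h2 : AA L x * V x = -((gg x * V x) * ss2 x) / (L - 1) := by rw [AA]; ring
      rw [h2, abs_div, abs_neg, abs_of_pos hL1, div_le_iff₀ hL1]
      have := abs_mul_le hgV (abs_ss2 x)
      nlinarith
    have h3 : |gd x * cc2 x / (L - 1)| ≤ 3 * ww x := by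
      rw [abs_div, abs_of_pos hL1, div_le_iff₀ hL1]
      have := abs_mul_le (abs_gd x) (abs_cc2 x)
      nlinarith
    calc |DD x + AA L x * V x + gd x * cc2 x / (L - 1)|
        ≤ |DD x + AA L x * V x| + |gd x * cc2 x / (L - 1)| := abs_add_le _ _
      _ ≤ |DD x| + |AA L x * V x| + |gd x * cc2 x / (L - 1)| := by
          nlinarith [abs_add_le (DD x) (AA L x * V x)]
      _ ≤ 140 * ww x := by nlinarith [abs_DD x]
  have hT3 : |2 * BB L x * V x| ≤ 70 * ww x := by
    have h2 : 2 * BB L x * V x = 2 * ((gg x * V x) * cc2 x) / (L - 1) := by rw [BB]; ring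
    rw [h2, abs_div, abs_of_pos hL1, div_le_iff₀ hL1]
    have h4 := abs_mul_le hgV (abs_cc2 x)
    have : |2 * (gg x * V x * cc2 x)| = 2 * |gg x * V x * cc2 x| := by
      rw [abs_mul, abs_two]
    nlinarith [abs_nonneg (gg x * V x * cc2 x)]
  -- combine
  have hXb := abs_X_le L hL u q x
  have hYb := abs_Y_le L hL u q x
  have hub := sq_u_le L hL u q x
  have step : |DM L u q x| ≤ 3 * ww x * NN L u q x + 140 * ww x * (NN L u q x / 4)
      + 70 * ww x * (NN L u q x / 16) := by
    rw [hid]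
    have t1 := abs_mul_le hE1 hXb
    have t2 := abs_mul_le hE2 hYb
    have t3 : |(2 * BB L x * V x) * u x ^ 2| ≤ 70 * ww x * (NN L u q x / 16) :=
      abs_mul_le hT3 (by rw [abs_of_nonneg (sq_nonneg (u x))]; exact hub)
    calc |_ + _ + _| ≤ |_ + _| + |(2 * BB L x * V x) * u x ^ 2| := abs_add_le _ _
      _ ≤ |(-(gd x * ss2 x) / (L - 1)) * (q x ^ 2 - L * u x ^ 2)|
          + |(DD x + AA L x * V x + gd x * cc2 x / (L - 1)) * (2 * u x * q x)|
          + |(2 * BB L x * V x) * u x ^ 2| := by nlinarith [abs_add_le ((-(gd x * ss2 x) / (L - 1)) * (q x ^ 2 - L * u x ^ 2)) ((DD x + AA L x * V x + gd x * cc2 x / (L - 1)) * (2 * u x * q x))]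
      _ ≤ _ := by linarith
  have hNM : NN L u q x ≤ 3 / 2 * MM L u q x := by
    have := MM_ge L hL u q x; linarith
  calc |DM L u q x| ≤ 3 * ww x * NN L u q x + 140 * ww x * (NN L u q x / 4)
      + 70 * ww x * (NN L u q x / 16) := step
    _ = 42.375 * ww x * NN L u q x := by ring
    _ ≤ 65 * ww x * MM L u q x := by nlinarith [MM_nonneg L hL u q x]

noncomputable def hh (x : ℝ) : ℝ := (1 + (2*x - 1)^2)⁻¹
noncomputable def HH (x : ℝ) : ℝ := Real.arctan (2*x - 1) / 2

lemma hasDerivAt_HH (x : ℝ) : HasDerivAt HH (hh x) x := by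
  have h1 : HasDerivAt (fun x : ℝ => 2*x - 1) 2 x :=
    (((hasDerivAt_id x).const_mul 2).sub_const 1).congr_deriv (by ring)
  have h2 := (Real.hasDerivAt_arctan (2*x-1)).comp x h1
  exact (h2.div_const 2).congr_deriv (by rw [hh]; rw [one_div]; ring)

lemma zeta_ge (x : ℝ) : 2*x - 1 ≤ zeta x := by
  rw [zeta]; nlinarith [Real.sin_le_one (2*x)]

lemma ww_le_hh (x : ℝ) (hx : 1 ≤ x) : ww x ≤ hh x := by
  rw [ww, hh]
  apply inv_anti₀ (by positivity)
  have h1 : 0 ≤ 2*x - 1 := by linarith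
  have h2 := zeta_ge x
  nlinarith

lemma HH_nonneg (x : ℝ) (hx : 1 ≤ x) : 0 ≤ HH x := by
  rw [HH]
  have h0 : Real.arctan 0 ≤ Real.arctan (2*x-1) :=
    Real.arctan_strictMono.monotone (by linarith)
  rw [Real.arctan_zero] at h0
  linarith

lemma HH_le_one (x : ℝ) : HH x ≤ 1 := by
  rw [HH]
  have h1 := Real.arctan_lt_pi_div_two (2*x - 1)
  have h2 := Real.pi_le_four
  linarith

lemma gronwall (L : ℝ) (hL : 16 < L) (u q : ℝ → ℝ)
    (hu : ∀ x, HasDerivAt u (q x) x) (hq : ∀ x, HasDerivAt q ((V x - L) * u x) x)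
    (x : ℝ) (hx : 1 ≤ x) :
    MM L u q 1 * Real.exp (-65) ≤ MM L u q x ∧ MM L u q x ≤ MM L u q 1 * Real.exp 65 := by
  have hMd : ∀ y, HasDerivAt (MM L u q) (DM L u q y) y := fun y => hasDerivAt_MM L u q y (hu y) (hq y)
  have hFd : ∀ y, HasDerivAt (fun t => MM L u q t * Real.exp (65 * HH t))
      ((DM L u q y + 65 * hh y * MM L u q y) * Real.exp (65 * HH y)) y := by
    intro y
    have h2 := (hMd y).mul (((hasDerivAt_HH y).const_mul 65).exp)
    exact h2.congr_deriv (by ring)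
  have hGd : ∀ y, HasDerivAt (fun t => MM L u q t * Real.exp (-(65 * HH t)))
      ((DM L u q y - 65 * hh y * MM L u q y) * Real.exp (-(65 * HH y))) y := by
    intro y
    have h2 := (hMd y).mul ((((hasDerivAt_HH y).const_mul 65).neg).exp)
    exact h2.congr_deriv (by simp only [Pi.neg_apply]; ring)
  have key : ∀ y, 1 < y → |DM L u q y| ≤ 65 * hh y * MM L u q y := by
    intro y hy
    refine (DM_bound L hL u q y).trans ?_
    have := ww_le_hh y hy.le
    nlinarith [MM_nonneg L hL u q y]
  have hFmono : MonotoneOn (fun t => MM L u q t * Real.exp (65 * HH t)) (Set.Ici 1) := by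
    apply monotoneOn_of_deriv_nonneg (convex_Ici 1)
    · exact fun y _ => ((hFd y).continuousAt.continuousWithinAt)
    · intro y hy
      exact ((hFd y).differentiableAt.differentiableWithinAt)
    · intro y hy
      rw [interior_Ici] at hy
      rw [(hFd y).deriv]
      have h3 := abs_le.mp (key y hy)
      have := Real.exp_pos (65 * HH y)
      nlinarith
  have hGanti : AntitoneOn (fun t => MM L u q t * Real.exp (-(65 * HH t))) (Set.Ici 1) := by
    apply antitoneOn_of_deriv_nonpos (convex_Ici 1)
    · exact fun y _ => ((hGd y).continuousAt.continuousWithinAt)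
    · intro y hy
      exact ((hGd y).differentiableAt.differentiableWithinAt)
    · intro y hy
      rw [interior_Ici] at hy
      rw [(hGd y).deriv]
      have h3 := abs_le.mp (key y hy)
      have := Real.exp_pos (-(65 * HH y))
      nlinarith
  have hM1 : 0 ≤ MM L u q 1 := MM_nonneg L hL u q 1
  have hMx : 0 ≤ MM L u q x := MM_nonneg L hL u q x
  constructor
  · have h1 := hFmono (Set.self_mem_Ici) (by exact hx) hx
    simp only at h1
    -- M 1 * exp (65*HH 1) ≤ M x * exp (65*HH x)
    have h2 : MM L u q 1 * Real.exp (-65) * Real.exp (65 * HH x) ≤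
        MM L u q 1 * Real.exp (65 * HH 1) := by
      rw [mul_assoc, ← Real.exp_add]
      apply mul_le_mul_of_nonneg_left _ hM1
      apply Real.exp_le_exp.mpr
      have := HH_le_one x
      have := HH_nonneg 1 le_rfl
      linarith
    have h3 := le_trans h2 h1
    have := Real.exp_pos (65 * HH x)
    exact le_of_mul_le_mul_right h3 this
  · have h1 := hGanti (Set.self_mem_Ici) (by exact hx) hx
    simp only at h1
    have h2 : MM L u q 1 * Real.exp (-(65 * HH 1)) ≤
        MM L u q 1 * Real.exp 65 * Real.exp (-(65 * HH x)) := by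
      rw [mul_assoc, ← Real.exp_add]
      apply mul_le_mul_of_nonneg_left _ hM1
      apply Real.exp_le_exp.mpr
      have := HH_le_one x
      have := HH_nonneg 1 le_rfl
      linarith
    have h3 := le_trans h1 h2
    have := Real.exp_pos (-(65 * HH x))
    exact le_of_mul_le_mul_right h3 this

lemma u_zero_of_init (L : ℝ) (hL : 16 < L) (u q : ℝ → ℝ)
    (hu : ∀ x, HasDerivAt u (q x) x) (hq : ∀ x, HasDerivAt q ((V x - L) * u x) x)
    (h1 : u 1 = 0) (h1' : q 1 = 0) : ∀ x, u x = 0 := by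
  set K := 106 + L with hK
  have hK0 : 0 < K := by rw [hK]; linarith
  have hPd : ∀ y, HasDerivAt (fun t => u t ^ 2 + q t ^ 2)
      (2 * u y * q y + 2 * q y * ((V y - L) * u y)) y := by
    intro y
    exact (((hu y).pow 2).add ((hq y).pow 2)).congr_deriv (by ring)
  have hPP : ∀ y, |2 * u y * q y + 2 * q y * ((V y - L) * u y)| ≤ K * (u y ^ 2 + q y ^ 2) := by
    intro y
    have h2 : 2 * u y * q y + 2 * q y * ((V y - L) * u y) = (2 * u y * q y) * (1 + V y - L) := by ring
    rw [h2]
    have h3 : |1 + V y - L| ≤ K := by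
      have := abs_le.mp (abs_V y)
      rw [abs_le]; constructor <;> [nlinarith; nlinarith]
    have h4 : |2 * u y * q y| ≤ u y ^ 2 + q y ^ 2 := by
      rw [abs_le]; constructor <;> nlinarith [sq_nonneg (u y - q y), sq_nonneg (u y + q y)]
    have := abs_mul_le h4 h3
    calc |(2 * u y * q y) * (1 + V y - L)| ≤ (u y ^ 2 + q y ^ 2) * K := this
      _ = K * (u y ^ 2 + q y ^ 2) := by ring
  have hF : ∀ y, HasDerivAt (fun t => (u t ^ 2 + q t ^ 2) * Real.exp (K * t))
      ((2 * u y * q y + 2 * q y * ((V y - L) * u y) + K * (u y ^ 2 + q y ^ 2)) * Real.exp (K * y)) y := by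
    intro y
    have := (hPd y).mul (((hasDerivAt_id y).const_mul K).exp)
    exact this.congr_deriv (by simp only [id_eq]; ring)
  have hG : ∀ y, HasDerivAt (fun t => (u t ^ 2 + q t ^ 2) * Real.exp (-(K * t)))
      ((2 * u y * q y + 2 * q y * ((V y - L) * u y) - K * (u y ^ 2 + q y ^ 2)) * Real.exp (-(K * y))) y := by
    intro y
    have := (hPd y).mul ((((hasDerivAt_id y).const_mul K).neg).exp)
    exact this.congr_deriv (by simp only [id_eq, Pi.neg_apply]; ring)
  have hFmono : Monotone (fun t => (u t ^ 2 + q t ^ 2) * Real.exp (K * t)) := by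
    apply monotone_of_deriv_nonneg
    · exact fun y => (hF y).differentiableAt
    · intro y
      rw [(hF y).deriv]
      have := abs_le.mp (hPP y)
      have := Real.exp_pos (K * y)
      nlinarith
  have hGanti : Antitone (fun t => (u t ^ 2 + q t ^ 2) * Real.exp (-(K * t))) := by
    apply antitone_of_deriv_nonpos
    · exact fun y => (hG y).differentiableAt
    · intro y
      rw [(hG y).deriv]
      have := abs_le.mp (hPP y)
      have := Real.exp_pos (-(K * y))
      nlinarith
  intro x
  rcases le_total x 1 with hx | hx
  · have := hFmono hx
    simp only [h1, h1'] at this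
    norm_num at this
    have h5 := Real.exp_pos (K * x)
    have h6 : u x ^ 2 = 0 := by nlinarith [sq_nonneg (u x), sq_nonneg (q x)]
    exact pow_eq_zero_iff two_ne_zero |>.mp h6
  · have := hGanti hx
    simp only [h1, h1'] at this
    norm_num at this
    have h5 := Real.exp_pos (-(K * x))
    have h6 : u x ^ 2 = 0 := by nlinarith [sq_nonneg (u x), sq_nonneg (q x)]
    exact pow_eq_zero_iff two_ne_zero |>.mp h6

open MeasureTheory in
lemma mass_pos (L Kb s0 τ x0 : ℝ) (u q : ℝ → ℝ)
    (hu' : ∀ x, HasDerivAt u (q x) x) (hq' : ∀ x, HasDerivAt q ((V x - L) * u x) x)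
    (hK : ∀ t, 1 ≤ t → |(V t - L) * u t| ≤ Kb - 1)
    (hs0 : 0 < s0) (hτ : 0 < τ) (hτK : Kb * τ ≤ s0 / 2)
    (hx0 : 1 ≤ x0) (hq0 : s0 ≤ q x0) (hu0small : |u x0| ≤ s0 * τ / 8)
    (hii : ∀ a b : ℝ, IntervalIntegrable (fun x => u x ^ 2) volume a b) :
    (s0 * τ / 8) ^ 2 * (τ / 2) ≤ ∫ x in x0..(x0 + τ), u x ^ 2 := by
  have hKb1 : 1 ≤ Kb := by
    have := (abs_nonneg ((V 1 - L) * u 1)).trans (hK 1 le_rfl)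
    linarith
  -- lower bound on q on [x0, x0+τ]
  have hmono1 : MonotoneOn (fun t => q t + Kb * t) (Set.Ici 1) := by
    apply monotoneOn_of_deriv_nonneg (convex_Ici 1)
    · intro t _
      exact (((hq' t).add ((hasDerivAt_id t).const_mul Kb)).continuousAt.continuousWithinAt)
    · intro t _
      exact ((hq' t).add ((hasDerivAt_id t).const_mul Kb)).differentiableAt.differentiableWithinAt
    · intro t ht
      rw [interior_Ici] at ht
      have hd : HasDerivAt (fun t => q t + Kb * t) ((V t - L) * u t + Kb) t :=
        (hq' t).add (((hasDerivAt_id t).const_mul Kb).congr_deriv (by ring : Kb * 1 = Kb))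
      rw [hd.deriv]
      have := abs_le.mp (hK t ht.le)
      linarith
  have hqlow : ∀ t, t ∈ Set.Icc x0 (x0 + τ) → s0 / 2 ≤ q t := by
    intro t ht
    have h1 : x0 ∈ Set.Ici (1:ℝ) := hx0
    have h2 : t ∈ Set.Ici (1:ℝ) := by
      simp only [Set.mem_Ici]; have := ht.1; linarith
    have h3 := hmono1 h1 h2 ht.1
    simp only at h3
    have h4 : Kb * (t - x0) ≤ Kb * τ := by
      have := ht.2
      have : t - x0 ≤ τ := by linarith
      nlinarith
    nlinarith
  -- monotonicity of u - (s0/2) t on the interval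
  have humono : MonotoneOn (fun t => u t - s0 / 2 * t) (Set.Icc x0 (x0 + τ)) := by
    apply monotoneOn_of_deriv_nonneg (convex_Icc x0 (x0 + τ))
    · intro t _
      exact ((hu' t).sub ((hasDerivAt_id t).const_mul (s0/2))).continuousAt.continuousWithinAt
    · intro t _
      exact ((hu' t).sub ((hasDerivAt_id t).const_mul (s0/2))).differentiableAt.differentiableWithinAt
    · intro t ht
      rw [interior_Icc] at ht
      have hd : HasDerivAt (fun t => u t - s0 / 2 * t) (q t - s0 / 2) t :=
        (hu' t).sub (((hasDerivAt_id t).const_mul (s0/2)).congr_deriv (by ring : s0/2 * 1 = s0/2))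
      rw [hd.deriv]
      have := hqlow t ⟨ht.1.le, ht.2.le⟩
      linarith
  -- pointwise lower bound for u on [x0 + τ/2, x0 + τ]
  have hptwise : ∀ t, t ∈ Set.Icc (x0 + τ/2) (x0 + τ) → s0 * τ / 8 ≤ u t := by
    intro t ht
    have h1 : x0 ∈ Set.Icc x0 (x0 + τ) := ⟨le_rfl, by linarith⟩
    have h2 : t ∈ Set.Icc x0 (x0 + τ) := ⟨by linarith [ht.1], ht.2⟩
    have h3 := humono h1 h2 (by linarith [ht.1])
    simp only at h3
    -- u t ≥ u x0 + s0/2 (t - x0) ≥ -(s0 τ/8) + s0/2 · (τ/2)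
    have h4 := abs_le.mp hu0small
    have h5 : x0 + τ/2 ≤ t := ht.1
    nlinarith
  -- integrate
  have hsplit : ∫ x in x0..(x0 + τ), u x ^ 2
      = (∫ x in x0..(x0 + τ/2), u x ^ 2) + ∫ x in (x0 + τ/2)..(x0 + τ), u x ^ 2 :=
    (intervalIntegral.integral_add_adjacent_intervals (hii _ _) (hii _ _)).symm
  have h6 : (0:ℝ) ≤ ∫ x in x0..(x0 + τ/2), u x ^ 2 := by
    apply intervalIntegral.integral_nonneg (by linarith)
    intro x _; positivity
  have h7 : (s0 * τ / 8) ^ 2 * (τ / 2) ≤ ∫ x in (x0 + τ/2)..(x0 + τ), u x ^ 2 := by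
    have hab : x0 + τ/2 ≤ x0 + τ := by linarith
    have h8 := intervalIntegral.integral_mono_on hab
      (intervalIntegrable_const (c := (s0 * τ / 8) ^ 2)) (hii _ _)
      (fun x hx => by
        have := hptwise x hx
        have h9 : (0:ℝ) ≤ s0 * τ / 8 := by positivity
        nlinarith)
    rw [intervalIntegral.integral_const] at h8
    have : (x0 + τ - (x0 + τ/2)) • (s0 * τ / 8) ^ 2 = (s0 * τ / 8) ^ 2 * (τ/2) := by
      rw [smul_eq_mul]; ring
    linarith [this ▸ h8]
  linarith

open MeasureTheory in
lemma mass_gen (L Kb s0 τ x0 : ℝ) (u q : ℝ → ℝ)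
    (hu' : ∀ x, HasDerivAt u (q x) x) (hq' : ∀ x, HasDerivAt q ((V x - L) * u x) x)
    (hK : ∀ t, 1 ≤ t → |(V t - L) * u t| ≤ Kb - 1)
    (hs0 : 0 < s0) (hτ : 0 < τ) (hτK : Kb * τ ≤ s0 / 2)
    (hx0 : 1 ≤ x0) (hq0 : s0 ≤ |q x0|) (hu0small : |u x0| ≤ s0 * τ / 8)
    (hii : ∀ a b : ℝ, IntervalIntegrable (fun x => u x ^ 2) volume a b) :
    (s0 * τ / 8) ^ 2 * (τ / 2) ≤ ∫ x in x0..(x0 + τ), u x ^ 2 := by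
  rcases le_or_gt 0 (q x0) with hsgn | hsgn
  · apply mass_pos L Kb s0 τ x0 u q hu' hq' hK hs0 hτ hτK hx0 _ hu0small hii
    rwa [abs_of_nonneg hsgn] at hq0
  · have hneg : ∀ a b : ℝ, IntervalIntegrable (fun x => (-u x) ^ 2) volume a b := by
      intro a b
      have : (fun x => (-u x) ^ 2) = fun x => u x ^ 2 := by funext y; ring
      rw [this]; exact hii a b
    have h := mass_pos L Kb s0 τ x0 (fun x => -u x) (fun x => -q x)
      (fun x => (hu' x).neg) (fun x => ((hq' x).neg).congr_deriv (by ring))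
      (fun t ht => by
        have := hK t ht
        calc |(V t - L) * (-u t)| = |(V t - L) * u t| := by
              rw [show (V t - L) * (-u t) = -((V t - L) * u t) by ring, abs_neg]
        _ ≤ Kb - 1 := this)
      hs0 hτ hτK hx0
      (by rwa [abs_of_neg hsgn] at hq0)
      (by rwa [abs_neg])
      hneg
    have heq : (∫ x in x0..(x0 + τ), (-u x) ^ 2) = ∫ x in x0..(x0 + τ), u x ^ 2 := by
      apply intervalIntegral.integral_congr
      intro y _; ring
    linarith [heq ▸ h]

set_option maxHeartbeats 1600000 in
/-- The Klein–Gordon operator with scalar von Neumann–Wigner potential has no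
eigenvalues E with E² > 16 + m²: the equation −u'' + (m² + V)u = E²u has no
nonzero C² square-integrable solution. -/
theorem no_KG_eigenvalues_above_threshold :
    ∀ m : ℝ, 0 ≤ m → ∀ E : ℝ, E ^ 2 > 16 + m ^ 2 →
      ¬ ∃ u : ℝ → ℝ, u ≠ 0 ∧ ContDiff ℝ 2 u ∧
        MeasureTheory.Integrable (fun x : ℝ => u x ^ 2) MeasureTheory.volume ∧
        ∀ x : ℝ, -(deriv (deriv u)) x + (m ^ 2 + V x) * u x = E ^ 2 * u x := by
  intro m hm E hE
  rintro ⟨u, hu0, hcd, hint, hode⟩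
  set q := deriv u with hqdef
  set L := E ^ 2 - m ^ 2 with hLdef
  have hL : 16 < L := by rw [hLdef]; linarith
  have hL0 : (0:ℝ) < L := by linarith
  have hu' : ∀ x, HasDerivAt u (q x) x := fun x =>
    ((hcd.differentiable (by norm_num)) x).hasDerivAt
  have hdq : Differentiable ℝ q := by
    have h2 : ContDiff ℝ (1 + 1) u := by
      convert hcd using 2
      try norm_num
    have h3 := (contDiff_succ_iff_deriv.mp h2).2.2
    exact h3.differentiable (by norm_num)
  have hq' : ∀ x, HasDerivAt q ((V x - L) * u x) x := by
    intro x
    have h := (hdq x).hasDerivAt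
    have he : deriv q x = (V x - L) * u x := by
      have h0 := hode x
      rw [hqdef, hLdef]
      linear_combination -h0
    rwa [he] at h
  clear_value q L
  -- nontrivial initial energy at x = 1
  by_cases hN1 : NN L u q 1 = 0
  · have hq1 : q 1 = 0 := by
      have h1 : q 1 ^ 2 = 0 := by
        rw [NN] at hN1
        nlinarith [sq_nonneg (q 1), sq_nonneg (u 1)]
      exact pow_eq_zero_iff two_ne_zero |>.mp h1
    have hu1 : u 1 = 0 := by
      have h1 : u 1 ^ 2 = 0 := by
        rw [NN] at hN1
        nlinarith [sq_nonneg (q 1), sq_nonneg (u 1)]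
      exact pow_eq_zero_iff two_ne_zero |>.mp h1
    exact hu0 (funext (u_zero_of_init L hL u q hu' hq' hu1 hq1))
  have hN1pos : 0 < NN L u q 1 :=
    lt_of_le_of_ne (NN_nonneg L hL u q 1) (Ne.symm hN1)
  have hM1pos : 0 < MM L u q 1 := by
    have := MM_ge L hL u q 1
    linarith
  -- tail bounds on the energy N
  obtain ⟨δ, hδdef⟩ : ∃ y : ℝ, y = 3/4 * (MM L u q 1 * Real.exp (-65)) := ⟨_, rfl⟩
  obtain ⟨Δ, hΔdef⟩ : ∃ y : ℝ, y = 3/2 * (MM L u q 1 * Real.exp 65) := ⟨_, rfl⟩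
  have hδpos : 0 < δ := by rw [hδdef]; positivity
  have hΔpos : 0 < Δ := by rw [hΔdef]; positivity
  have hNlb : ∀ x, 1 ≤ x → δ ≤ NN L u q x := by
    intro x hx
    have g := (gronwall L hL u q hu' hq' x hx).1
    have h2 := MM_le L hL u q x
    rw [hδdef]; linarith
  have hNub : ∀ x, 1 ≤ x → NN L u q x ≤ Δ := by
    intro x hx
    have g := (gronwall L hL u q hu' hq' x hx).2
    have h2 := MM_ge L hL u q x
    rw [hΔdef]; linarith
  -- constants
  obtain ⟨Kb, hKbdef⟩ : ∃ y : ℝ, y = (104 + L) * Real.sqrt (Δ / L) + 1 := ⟨_, rfl⟩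
  have hKb1 : 1 ≤ Kb := by
    rw [hKbdef]
    have h1 : (0:ℝ) ≤ Real.sqrt (Δ / L) := Real.sqrt_nonneg _
    nlinarith
  have hKb0 : 0 < Kb := by linarith
  have hKbb : ∀ t, 1 ≤ t → |(V t - L) * u t| ≤ Kb - 1 := by
    intro t ht
    have h1 : |V t - L| ≤ 104 + L := by
      have := abs_le.mp (abs_V t)
      rw [abs_le]; constructor <;> nlinarith
    have h2 : |u t| ≤ Real.sqrt (Δ / L) := by
      have h3 : u t ^ 2 ≤ Δ / L := by
        have h4 := hNub t ht
        rw [NN] at h4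
        rw [le_div_iff₀ hL0]
        nlinarith [sq_nonneg (q t)]
      calc |u t| = Real.sqrt (u t ^ 2) := (Real.sqrt_sq_eq_abs (u t)).symm
        _ ≤ Real.sqrt (Δ / L) := Real.sqrt_le_sqrt h3
    have := abs_mul_le h1 h2
    rw [hKbdef]; linarith
  obtain ⟨s0, hs0def⟩ : ∃ y : ℝ, y = Real.sqrt (δ/2) := ⟨_, rfl⟩
  have hs0 : 0 < s0 := by rw [hs0def]; exact Real.sqrt_pos.mpr (by linarith)
  have hs0sq : s0 ^ 2 = δ/2 := by rw [hs0def]; exact Real.sq_sqrt (by linarith)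
  obtain ⟨τ, hτdef⟩ : ∃ y : ℝ, y = min 1 (s0 / (2 * Kb)) := ⟨_, rfl⟩
  have hτ : 0 < τ := by rw [hτdef]; exact lt_min one_pos (by positivity)
  have hτ1 : τ ≤ 1 := by rw [hτdef]; exact min_le_left _ _
  have hτK : Kb * τ ≤ s0 / 2 := by
    have h1 : τ ≤ s0 / (2 * Kb) := by rw [hτdef]; exact min_le_right _ _
    have h2 : Kb * (s0 / (2 * Kb)) = s0 / 2 := by field_simp
    nlinarith
  obtain ⟨ε0, hε0def⟩ : ∃ y : ℝ, y = min ((s0 * τ / 8) ^ 2) (δ / (2 * L)) := ⟨_, rfl⟩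
  have hε0 : 0 < ε0 := by rw [hε0def]; exact lt_min (by positivity) (by positivity)
  obtain ⟨c0, hc0def⟩ : ∃ y : ℝ, y = (s0 * τ / 8) ^ 2 * (τ / 2) := ⟨_, rfl⟩
  have hc0 : 0 < c0 := by rw [hc0def]; positivity
  -- integral facts
  obtain ⟨I, hIdef⟩ : ∃ y : ℝ, y = ∫ x, u x ^ 2 := ⟨_, rfl⟩
  have hii : ∀ a b : ℝ, IntervalIntegrable (fun x => u x ^ 2) volume a b :=
    fun a b => hint.intervalIntegrable
  have hIub : ∀ a b : ℝ, a ≤ b → (∫ x in a..b, u x ^ 2) ≤ I := by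
    intro a b hab
    rw [intervalIntegral.integral_of_le hab, hIdef]
    exact setIntegral_le_integral hint (Filter.Eventually.of_forall fun y => sq_nonneg _)
  have hI0 : 0 ≤ I := by
    rw [hIdef]; exact integral_nonneg fun y => sq_nonneg _
  -- existence of small points beyond any R
  have hex : ∀ R : ℝ, ∃ x0 : ℝ, max 1 R ≤ x0 ∧ u x0 ^ 2 ≤ ε0 := by
    intro R
    by_contra hcon
    push_neg at hcon
    set a : ℝ := max 1 R with hadef
    set b : ℝ := a + (I + 1) / ε0 with hbdef
    have hab : a ≤ b := by
      rw [hbdef]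
      have : 0 ≤ (I + 1) / ε0 := by positivity
      linarith
    have h1 := intervalIntegral.integral_mono_on (μ := volume)
      (f := fun _ => ε0) (g := fun x => u x ^ 2) hab
      intervalIntegrable_const (hii a b)
      (fun x hx => (hcon x (le_trans le_rfl hx.1)).le)
    rw [intervalIntegral.integral_const] at h1
    have h2 := hIub a b hab
    have h3 : (b - a) • ε0 = I + 1 := by
      rw [smul_eq_mul, hbdef]
      field_simp
      ring
    rw [h3] at h1
    linarith
  choose pt hpt1 hpt2 using hex
  set X : ℕ → ℝ := fun n => Nat.rec (motive := fun _ => ℝ) (pt 0) (fun _ xk => pt (xk + τ)) n with hXdef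
  have hX0 : X 0 = pt 0 := rfl
  have hXsucc : ∀ n, X (n+1) = pt (X n + τ) := fun n => rfl
  have hX1 : ∀ n, 1 ≤ X n := by
    intro n
    cases n with
    | zero => exact le_trans (le_max_left 1 0) (hpt1 0)
    | succ k => rw [hXsucc k]; exact le_trans (le_max_left _ _) (hpt1 _)
  have hXs : ∀ n, X n + τ ≤ X (n+1) := by
    intro n
    rw [hXsucc n]
    exact le_trans (le_max_right 1 (X n + τ)) (hpt1 _)
  have hXε : ∀ n, u (X n) ^ 2 ≤ ε0 := by
    intro n
    cases n with
    | zero => exact hpt2 0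
    | succ k => rw [hXsucc k]; exact hpt2 _
  clear_value X
  -- mass at each point
  have hmassn : ∀ n, c0 ≤ ∫ x in (X n)..(X n + τ), u x ^ 2 := by
    intro n
    have hx1 := hX1 n
    have hsm := hXε n
    have hNx := hNlb (X n) hx1
    have hq0 : s0 ≤ |q (X n)| := by
      have h1 : δ/2 ≤ q (X n) ^ 2 := by
        rw [NN] at hNx
        have h2 : ε0 ≤ δ / (2 * L) := by rw [hε0def]; exact min_le_right _ _
        have h3 : L * u (X n) ^ 2 ≤ δ/2 := by
          have := mul_le_mul_of_nonneg_left (hsm.trans h2) hL0.le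
          calc L * u (X n) ^ 2 ≤ L * (δ / (2 * L)) := this
            _ = δ/2 := by field_simp
        linarith
      calc s0 = Real.sqrt (δ/2) := hs0def
        _ ≤ Real.sqrt (q (X n) ^ 2) := Real.sqrt_le_sqrt h1
        _ = |q (X n)| := Real.sqrt_sq_eq_abs _
    have hu0s : |u (X n)| ≤ s0 * τ / 8 := by
      have h1 : u (X n) ^ 2 ≤ (s0 * τ / 8) ^ 2 := hsm.trans (by rw [hε0def]; exact min_le_left _ _)
      calc |u (X n)| = Real.sqrt (u (X n) ^ 2) := (Real.sqrt_sq_eq_abs _).symm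
        _ ≤ Real.sqrt ((s0 * τ / 8) ^ 2) := Real.sqrt_le_sqrt h1
        _ = s0 * τ / 8 := by
            rw [Real.sqrt_sq (by positivity)]
    rw [hc0def]
    exact mass_gen L Kb s0 τ (X n) u q hu' hq' hKbb hs0 hτ hτK hx1 hq0 hu0s hii
  -- accumulate mass
  have hkey : ∀ n : ℕ, ((n:ℝ) + 1) * c0 ≤ ∫ x in (1:ℝ)..(X n + τ), u x ^ 2 := by
    intro n
    induction n with
    | zero =>
      have hsplit := intervalIntegral.integral_add_adjacent_intervals
        (hii 1 (X 0)) (hii (X 0) (X 0 + τ))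
      have h1 : (0:ℝ) ≤ ∫ x in (1:ℝ)..(X 0), u x ^ 2 :=
        intervalIntegral.integral_nonneg (hX1 0) (fun x _ => sq_nonneg _)
      have h2 := hmassn 0
      push_cast
      linarith
    | succ n ih =>
      have eA := intervalIntegral.integral_add_adjacent_intervals
        (hii 1 (X n + τ)) (hii (X n + τ) (X (n+1)))
      have eB := intervalIntegral.integral_add_adjacent_intervals
        (hii 1 (X (n+1))) (hii (X (n+1)) (X (n+1) + τ))
      have h1 : (0:ℝ) ≤ ∫ x in (X n + τ)..(X (n+1)), u x ^ 2 :=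
        intervalIntegral.integral_nonneg (hXs n) (fun x _ => sq_nonneg _)
      have h2 := hmassn (n+1)
      push_cast
      push_cast at ih
      linarith
  obtain ⟨n, hn⟩ := exists_nat_gt (I / c0)
  have h1 := hkey n
  have h2 : 1 ≤ X n + τ := by linarith [hX1 n]
  have h3 := hIub 1 (X n + τ) h2
  have h4 : I < ((n:ℝ) + 1) * c0 := by
    rw [div_lt_iff₀ hc0] at hn
    nlinarith
  linarith
end
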